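/- Every countably generated free filter on ℕ is diagonal: for every sequence (A_n) of members of F and every F-stationary set I, there exists an F-stationary set J ⊆ I such that J \ A_n is finite for every n. -/
import Mathlib


/-- A filter on ℕ, as a family of subsets: nonempty (contains `univ`), not containing `∅`,
closed under finite intersections and supersets. -/
def IsSetFilter (F : Set (Set ℕ)) : Prop :=
  Set.univ ∈ F ∧ ∅ ∉ F ∧ (∀ A ∈ F, ∀ B ∈ F, A ∩ B ∈ F) ∧ ∀ A ∈ F, ∀ B : Set ℕ, A ⊆ B → B ∈ F

/-- A filter is free if its dual ideal contains all finite sets, i.e. the complement of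
every finite set belongs to the filter. -/
def IsFreeSetFilter (F : Set (Set ℕ)) : Prop :=
  IsSetFilter F ∧ ∀ S : Set ℕ, S.Finite → Sᶜ ∈ F

/-- `H` is `F`-stationary iff it does not belong to the dual ideal of `F`,
i.e. `Hᶜ ∉ F`. -/
def FStationary (F : Set (Set ℕ)) (H : Set ℕ) : Prop := Hᶜ ∉ F

/-- The dual ideal of `F` is countably generated by the partition `A` of ℕ into
pairwise disjoint nonempty sets: it consists exactly of the finite unions of subsets
of the sets `A k`. -/
def CountablyGeneratedBy (F : Set (Set ℕ)) (A : ℕ → Set ℕ) : Prop :=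
  (∀ k, (A k).Nonempty) ∧ Pairwise (Function.onFun Disjoint A) ∧ (⋃ k, A k) = Set.univ ∧
    ∀ S : Set ℕ, Sᶜ ∈ F ↔ ∃ T : Finset ℕ, ∃ B : ℕ → Set ℕ,
      (∀ k ∈ T, B k ⊆ A k) ∧ S = ⋃ k ∈ T, B k

/-- `F` is super-diagonal: every stationary set has a stationary subset all of whose
infinite subsets are stationary. -/
def SuperDiagonal (F : Set (Set ℕ)) : Prop :=
  ∀ I : Set ℕ, FStationary F I →
    ∃ J ⊆ I, FStationary F J ∧ ∀ K ⊆ J, K.Infinite → FStationary F K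

/-- `F` is diagonal: for every sequence `(A n)` of members of `F` and every stationary
set `I` there exists a stationary `J ⊆ I` with `J \ A n` finite for all `n`. -/
def DiagonalFilter (F : Set (Set ℕ)) : Prop :=
  ∀ A : ℕ → Set ℕ, (∀ n, A n ∈ F) → ∀ I : Set ℕ, FStationary F I →
    ∃ J ⊆ I, FStationary F J ∧ ∀ n, (J \ A n).Finite

/-- `F` is block-respecting: for every stationary set `H` and every partition `(D k)`
of `H` into finite sets, there is a stationary `J ⊆ H` with `|J ∩ D k| ≤ 1` for all `k`. -/
def BlockRespecting (F : Set (Set ℕ)) : Prop :=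
  ∀ H : Set ℕ, FStationary F H → ∀ D : ℕ → Set ℕ, (∀ k, (D k).Finite) →
    Pairwise (Function.onFun Disjoint D) → (⋃ k, D k) = H →
    ∃ J ⊆ H, FStationary F J ∧ ∀ k, (J ∩ D k).Subsingleton

/-- every countably generated free filter on ℕ is diagonal. -/
theorem stmt1 (F : Set (Set ℕ)) (A : ℕ → Set ℕ)
    (hF : IsFreeSetFilter F) (hgen : CountablyGeneratedBy F A) :
    DiagonalFilter F := by
  obtain ⟨hne, hdisj, hcov, hideal⟩ := hgen
  intro B hB I hI
  classical
  set K : Set ℕ := {k | (I ∩ A k).Nonempty} with hKdef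
  have hKinf : K.Infinite := by
    intro hfin
    apply hI
    rw [hideal]
    refine ⟨hfin.toFinset, fun k => I ∩ A k, fun k _ => Set.inter_subset_right, ?_⟩
    ext n
    simp only [Set.mem_iUnion, Set.Finite.mem_toFinset, exists_prop]
    constructor
    · intro hn
      have hn2 : n ∈ ⋃ k, A k := by rw [hcov]; trivial
      obtain ⟨k, hk⟩ := Set.mem_iUnion.1 hn2
      exact ⟨k, ⟨n, hn, hk⟩, hn, hk⟩
    · rintro ⟨k, -, hn, -⟩; exact hn
  set f : ℕ → ℕ := fun k => if h : (I ∩ A k).Nonempty then h.choose else 0 with hf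
  have hfmem : ∀ k ∈ K, f k ∈ I ∩ A k := by
    intro k hk
    have : f k = hk.choose := dif_pos hk
    rw [this]; exact hk.choose_spec
  refine ⟨f '' K, ?_, ?_, ?_⟩
  · rintro m ⟨k, hk, rfl⟩; exact (hfmem k hk).1
  · intro hJ
    rw [hideal] at hJ
    obtain ⟨T, C, hC, hJeq⟩ := hJ
    obtain ⟨k, hkK, hkT⟩ := hKinf.exists_notMem_finset T
    have hmem : f k ∈ f '' K := ⟨k, hkK, rfl⟩
    rw [hJeq] at hmem
    simp only [Set.mem_iUnion, exists_prop] at hmem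
    obtain ⟨k', hk'T, hmem⟩ := hmem
    have hne' : k ≠ k' := fun h => hkT (h ▸ hk'T)
    exact (hdisj hne').ne_of_mem (hfmem k hkK).2 (hC k' hk'T hmem) rfl
  · intro n
    have hBn : (B n)ᶜᶜ ∈ F := by rw [compl_compl]; exact hB n
    rw [hideal] at hBn
    obtain ⟨T, C, hC, hBeq⟩ := hBn
    apply Set.Finite.subset (T.finite_toSet.image f)
    rintro m ⟨⟨k, hkK, rfl⟩, hnB⟩
    have : f k ∈ (B n)ᶜ := hnB
    rw [hBeq] at this
    simp only [Set.mem_iUnion, exists_prop] at this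
    obtain ⟨k', hk'T, hmem⟩ := this
    have hkk' : k = k' := by
      by_contra h
      exact (hdisj h).ne_of_mem (hfmem k hkK).2 (hC k' hk'T hmem) rfl
    exact ⟨k', by simpa using hk'T, (congrArg f hkk').symm⟩
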